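/- arXiv:1704.04524 — 2 statements merged into one kernel-verified Lean document; each statement's English description precedes it below -/
import Mathlib

section
/- The vector z* = D⁻¹(v − λ*c + μ*eₙ) is the unique minimizer of the primal problem: for every z ∈ ℝⁿ with c^⊤z = 0 and zₙ ≥ 0 one has f(z*) ≤ f(z), with equality only if z = z*; moreover z* itself is feasible, i.e. c^⊤z* = 0 and z*ₙ ≥ 0. -/
open Finset

noncomputable section

namespace Stmt0

/-- The last index of `Fin (n+2)` (corresponding to the `n`-th coordinate
of an `n`-dimensional problem with `n ≥ 2`). -/
def lastIdx (n : ℕ) : Fin (n + 2) := Fin.last (n + 1)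

variable {n : ℕ}

/-- `c^⊤ D⁻¹ v` for the diagonal matrix `D = diag d`. -/
def cDv (d v c : Fin (n + 2) → ℝ) : ℝ := ∑ i, c i * v i / d i

/-- `c^⊤ D⁻¹ c` for the diagonal matrix `D = diag d`. -/
def cDc (d c : Fin (n + 2) → ℝ) : ℝ := ∑ i, c i * c i / d i

/-- The indicator `1_A`. -/
def indA (d v c : Fin (n + 2) → ℝ) : ℝ :=
  if v (lastIdx n) - cDv d v c / cDc d c * c (lastIdx n) < 0 then 1 else 0

/-- `λ*`. -/
def lamStar (d v c : Fin (n + 2) → ℝ) : ℝ :=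
  (cDv d v c - c (lastIdx n) * v (lastIdx n) / d (lastIdx n) * indA d v c) /
    (cDc d c - c (lastIdx n) ^ 2 / d (lastIdx n) * indA d v c)

/-- `μ* = (vₙ - λ* cₙ)⁻ = max (-(vₙ - λ* cₙ)) 0`. -/
def muStar (d v c : Fin (n + 2) → ℝ) : ℝ :=
  max (-(v (lastIdx n) - lamStar d v c * c (lastIdx n))) 0

/-- `z* = D⁻¹ (v - λ* c + μ* eₙ)`. -/
def zStar (d v c : Fin (n + 2) → ℝ) : Fin (n + 2) → ℝ := fun i =>
  (v i - lamStar d v c * c i + muStar d v c * (if i = lastIdx n then 1 else 0)) / d i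

/-- The primal cost function `f(z) = ½ z^⊤ D z - v^⊤ z`. -/
def f (d v z : Fin (n + 2) → ℝ) : ℝ :=
  (1 / 2) * ∑ i, d i * z i ^ 2 - ∑ i, v i * z i

/-- `z*` is feasible and is the unique minimizer of the primal problem. -/
theorem primal_unique_minimizer
    (n : ℕ) (d v c : Fin (n + 2) → ℝ)
    (hd : ∀ i, 0 < d i)
    (hc : ∃ i : Fin (n + 2), i ≠ lastIdx n ∧ c i ≠ 0) :
    (∑ i, c i * zStar d v c i = 0) ∧
    0 ≤ zStar d v c (lastIdx n) ∧
    (∀ z : Fin (n + 2) → ℝ, (∑ i, c i * z i = 0) → 0 ≤ z (lastIdx n) →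
      f d v (zStar d v c) ≤ f d v z ∧
      (f d v (zStar d v c) = f d v z → z = zStar d v c)) := by
  have hd0 : ∀ i, d i ≠ 0 := fun i => (hd i).ne'
  have hdn := hd0 (lastIdx n)
  -- abbreviations (not `set`, to keep syntactic match)
  have hM0 : 0 ≤ muStar d v c := le_max_right _ _
  have hMge : -(v (lastIdx n) - lamStar d v c * c (lastIdx n)) ≤ muStar d v c :=
    le_max_left _ _
  -- d i * zs i
  have hDzs : ∀ i, d i * zStar d v c i
      = v i - lamStar d v c * c i + muStar d v c * (if i = lastIdx n then 1 else 0) := by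
    intro i
    unfold zStar
    exact mul_div_cancel₀ _ (hd0 i)
  have hcDc : 0 < cDc d c := by
    obtain ⟨i, _, hci⟩ := hc
    unfold cDc
    apply Finset.sum_pos' (fun j _ => div_nonneg (mul_self_nonneg _) (hd j).le)
    exact ⟨i, Finset.mem_univ i, div_pos (mul_self_pos.mpr hci) (hd i)⟩
  have hrest : cDc d c - c (lastIdx n) ^ 2 / d (lastIdx n)
      = ∑ i ∈ Finset.univ.erase (lastIdx n), c i * c i / d i := by
    unfold cDc
    rw [← Finset.add_sum_erase _ _ (Finset.mem_univ (lastIdx n))]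
    ring
  have hrestpos : 0 < cDc d c - c (lastIdx n) ^ 2 / d (lastIdx n) := by
    rw [hrest]
    obtain ⟨i, hiN, hci⟩ := hc
    apply Finset.sum_pos' (fun j _ => div_nonneg (mul_self_nonneg _) (hd j).le)
    exact ⟨i, Finset.mem_erase.mpr ⟨hiN, Finset.mem_univ i⟩,
      div_pos (mul_self_pos.mpr hci) (hd i)⟩
  -- the generic sum expansion
  have hfeas_sum : ∑ i, c i * zStar d v c i
      = cDv d v c - lamStar d v c * cDc d c
        + muStar d v c * (c (lastIdx n) / d (lastIdx n)) := by
    have e : ∀ i, c i * zStar d v c i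
        = (c i * v i / d i - lamStar d v c * (c i * c i / d i))
          + (if i = lastIdx n then muStar d v c * (c (lastIdx n) / d (lastIdx n)) else 0) := by
      intro i
      unfold zStar
      by_cases h : i = lastIdx n
      · subst h; rw [if_pos rfl, if_pos rfl]; field_simp
      · rw [if_neg h, if_neg h]; field_simp; ring
    rw [Finset.sum_congr rfl fun i _ => e i, Finset.sum_add_distrib,
      Finset.sum_sub_distrib, ← Finset.mul_sum, Finset.sum_ite_eq']
    simp only [Finset.mem_univ, if_true]
    unfold cDv cDc
    ring
  -- case split on the indicator to prove feasibility equation = 0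
  have hfeas_zero : ∑ i, c i * zStar d v c i = 0 := by
    by_cases hA : v (lastIdx n) - cDv d v c / cDc d c * c (lastIdx n) < 0
    · -- indicator = 1
      have hind : indA d v c = 1 := if_pos hA
      have hLval : lamStar d v c
          = (cDv d v c - c (lastIdx n) * v (lastIdx n) / d (lastIdx n)) /
            (cDc d c - c (lastIdx n) ^ 2 / d (lastIdx n)) := by
        unfold lamStar; rw [hind, mul_one, mul_one]
      have h1 : v (lastIdx n) * cDc d c < cDv d v c * c (lastIdx n) := by
        rw [sub_neg, div_mul_eq_mul_div, lt_div_iff₀ hcDc] at hA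
        exact hA
      have h2 : v (lastIdx n) - lamStar d v c * c (lastIdx n) < 0 := by
        rw [hLval, sub_neg, div_mul_eq_mul_div, lt_div_iff₀ hrestpos]
        have e : v (lastIdx n) * (cDc d c - c (lastIdx n) ^ 2 / d (lastIdx n))
            - (cDv d v c - c (lastIdx n) * v (lastIdx n) / d (lastIdx n)) * c (lastIdx n)
            = v (lastIdx n) * cDc d c - cDv d v c * c (lastIdx n) := by
          field_simp; ring
        linarith
      have hMval : muStar d v c = -(v (lastIdx n) - lamStar d v c * c (lastIdx n)) := by
        unfold muStar; exact max_eq_left (by linarith)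
      have hLmul : lamStar d v c * (cDc d c - c (lastIdx n) ^ 2 / d (lastIdx n))
          = cDv d v c - c (lastIdx n) * v (lastIdx n) / d (lastIdx n) := by
        rw [hLval, div_mul_cancel₀ _ hrestpos.ne']
      rw [hfeas_sum, hMval]
      have e2 : cDv d v c - lamStar d v c * cDc d c
          + -(v (lastIdx n) - lamStar d v c * c (lastIdx n)) * (c (lastIdx n) / d (lastIdx n))
          = (cDv d v c - c (lastIdx n) * v (lastIdx n) / d (lastIdx n))
            - lamStar d v c * (cDc d c - c (lastIdx n) ^ 2 / d (lastIdx n)) := by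
        field_simp; ring
      rw [e2, hLmul, sub_self]
    · -- indicator = 0
      have hind : indA d v c = 0 := if_neg hA
      have hLval : lamStar d v c = cDv d v c / cDc d c := by
        unfold lamStar; rw [hind, mul_zero, mul_zero, sub_zero, sub_zero]
      have h2 : 0 ≤ v (lastIdx n) - lamStar d v c * c (lastIdx n) := by
        rw [hLval]; exact not_lt.mp hA
      have hMval : muStar d v c = 0 := by
        unfold muStar; exact max_eq_right (by linarith)
      rw [hfeas_sum, hMval, hLval, zero_mul, add_zero,
        div_mul_cancel₀ _ hcDc.ne', sub_self]
  -- z*_n ≥ 0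
  have hzsN : 0 ≤ zStar d v c (lastIdx n) := by
    unfold zStar
    rw [if_pos rfl, mul_one]
    apply div_nonneg _ (hd (lastIdx n)).le
    linarith
  -- complementary slackness
  have hcs : muStar d v c * zStar d v c (lastIdx n) = 0 := by
    rcases le_or_gt 0 (v (lastIdx n) - lamStar d v c * c (lastIdx n)) with h | h
    · have hMval : muStar d v c = 0 := max_eq_right (by unfold muStar at *; linarith)
      rw [hMval, zero_mul]
    · have hMval : muStar d v c = -(v (lastIdx n) - lamStar d v c * c (lastIdx n)) :=
        max_eq_left (by linarith)
      have hz0 : zStar d v c (lastIdx n) = 0 := by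
        unfold zStar
        rw [if_pos rfl, mul_one, hMval]
        ring
      rw [hz0, mul_zero]
  refine ⟨hfeas_zero, hzsN, ?_⟩
  intro z hz hzN
  -- key identity
  have hf : ∀ w : Fin (n + 2) → ℝ,
      f d v w = ∑ i, ((1 / 2 : ℝ) * (d i * w i ^ 2) - v i * w i) := by
    intro w; unfold f
    rw [Finset.sum_sub_distrib, ← Finset.mul_sum]
  have hlin : ∑ i, (d i * zStar d v c i - v i) * (z i - zStar d v c i)
      = muStar d v c * z (lastIdx n) := by
    have e : ∀ i, (d i * zStar d v c i - v i) * (z i - zStar d v c i)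
        = (-(lamStar d v c) * (c i * z i) + lamStar d v c * (c i * zStar d v c i))
          + (if i = lastIdx n
              then muStar d v c * (z (lastIdx n) - zStar d v c (lastIdx n)) else 0) := by
      intro i
      rw [hDzs i]
      by_cases h : i = lastIdx n
      · subst h; rw [if_pos rfl, if_pos rfl]; ring
      · rw [if_neg h, if_neg h]; ring
    rw [Finset.sum_congr rfl fun i _ => e i, Finset.sum_add_distrib,
      Finset.sum_add_distrib, ← Finset.mul_sum, ← Finset.mul_sum, hz, hfeas_zero,
      Finset.sum_ite_eq']
    simp only [Finset.mem_univ, if_true, mul_zero, zero_add, add_zero]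
    -- goal: μ (z N - zs N) = μ z N
    have : muStar d v c * (z (lastIdx n) - zStar d v c (lastIdx n))
        = muStar d v c * z (lastIdx n) - muStar d v c * zStar d v c (lastIdx n) := by ring
    rw [this, hcs, sub_zero]
  have hkey : f d v z - f d v (zStar d v c)
      = (1 / 2) * (∑ i, d i * (z i - zStar d v c i) ^ 2) + muStar d v c * z (lastIdx n) := by
    rw [← hlin, hf z, hf (zStar d v c), Finset.mul_sum, ← Finset.sum_add_distrib,
      ← Finset.sum_sub_distrib]
    exact Finset.sum_congr rfl fun i _ => by ring
  have hQ : 0 ≤ ∑ i, d i * (z i - zStar d v c i) ^ 2 :=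
    Finset.sum_nonneg fun i _ => mul_nonneg (hd i).le (sq_nonneg _)
  have hMz : 0 ≤ muStar d v c * z (lastIdx n) := mul_nonneg hM0 hzN
  constructor
  · linarith
  · intro heq
    have hQ0 : ∑ i, d i * (z i - zStar d v c i) ^ 2 = 0 := by linarith
    have := (Finset.sum_eq_zero_iff_of_nonneg
      (fun i _ => mul_nonneg (hd i).le (sq_nonneg _) : ∀ i ∈ Finset.univ, (0:ℝ) ≤ d i * (z i - zStar d v c i) ^ 2)).mp hQ0
    funext i
    have hi := this i (Finset.mem_univ i)
    have : (z i - zStar d v c i) ^ 2 = 0 := by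
      rcases mul_eq_zero.mp hi with h | h
      · exact absurd h (hd0 i)
      · exact h
    have := pow_eq_zero_iff (n := 2) (by norm_num) |>.mp this
    linarith [this]

end Stmt0
end
end

section
/- The minimizer z* = D⁻¹(v − λ*c + μ*eₙ) of the primal problem satisfies the bound ‖z*‖ ≤ d_min⁻¹‖v‖, where d_min = min(d₁,…,dₙ) and ‖·‖ is the Euclidean norm on ℝⁿ. -/
open Finset

noncomputable section

namespace Stmt1

/-- The last index of `Fin (n+2)`. -/
def lastIdx (n : ℕ) : Fin (n + 2) := Fin.last (n + 1)

variable {n : ℕ}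

/-- The Euclidean norm of a vector in `ℝ^m`. -/
def enorm {m : ℕ} (z : Fin m → ℝ) : ℝ := Real.sqrt (∑ i, z i ^ 2)

/-- `d_min = min(d₁,…,dₙ)`. -/
def dMin (d : Fin (n + 2) → ℝ) : ℝ := Finset.univ.inf' Finset.univ_nonempty d

/-- `c^⊤ D⁻¹ v` for the diagonal matrix `D = diag d`. -/
def cDv (d v c : Fin (n + 2) → ℝ) : ℝ := ∑ i, c i * v i / d i

/-- `c^⊤ D⁻¹ c` for the diagonal matrix `D = diag d`. -/
def cDc (d c : Fin (n + 2) → ℝ) : ℝ := ∑ i, c i * c i / d i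

/-- The indicator `1_A`. -/
def indA (d v c : Fin (n + 2) → ℝ) : ℝ :=
  if v (lastIdx n) - cDv d v c / cDc d c * c (lastIdx n) < 0 then 1 else 0

/-- `λ*`. -/
def lamStar (d v c : Fin (n + 2) → ℝ) : ℝ :=
  (cDv d v c - c (lastIdx n) * v (lastIdx n) / d (lastIdx n) * indA d v c) /
    (cDc d c - c (lastIdx n) ^ 2 / d (lastIdx n) * indA d v c)

/-- `μ* = max (-(vₙ - λ* cₙ)) 0`. -/
def muStar (d v c : Fin (n + 2) → ℝ) : ℝ :=
  max (-(v (lastIdx n) - lamStar d v c * c (lastIdx n))) 0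

/-- `z* = D⁻¹ (v - λ* c + μ* eₙ)`. -/
def zStar (d v c : Fin (n + 2) → ℝ) : Fin (n + 2) → ℝ := fun i =>
  (v i - lamStar d v c * c i + muStar d v c * (if i = lastIdx n then 1 else 0)) / d i

/-- KKT facts: `c ⬝ z* = 0` and complementary slackness `μ* z*ₙ = 0`. -/
lemma kkt (n : ℕ) (d v c : Fin (n + 2) → ℝ)
    (hd : ∀ i, 0 < d i)
    (hc : ∃ i : Fin (n + 2), i ≠ lastIdx n ∧ c i ≠ 0) :
    (∑ i, c i * zStar d v c i) = 0 ∧ muStar d v c * zStar d v c (lastIdx n) = 0 := by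
  set N := lastIdx n with hN
  obtain ⟨j, hjN, hj⟩ := hc
  have hdne : ∀ i, d i ≠ 0 := fun i => (hd i).ne'
  -- positivity of cDc
  have hcDc : 0 < cDc d c := by
    apply Finset.sum_pos' (fun i _ => div_nonneg (mul_self_nonneg _) (hd i).le)
    exact ⟨j, Finset.mem_univ j, div_pos (mul_self_pos.2 hj) (hd j)⟩
  -- positivity of the reduced sum
  have hsplit : cDc d c = c N * c N / d N + ∑ i ∈ Finset.univ.erase N, c i * c i / d i := by
    rw [cDc, ← Finset.add_sum_erase _ _ (Finset.mem_univ N)]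
  have hs : 0 < cDc d c - c N ^ 2 / d N := by
    have : cDc d c - c N ^ 2 / d N = ∑ i ∈ Finset.univ.erase N, c i * c i / d i := by
      rw [hsplit, sq]; ring
    rw [this]
    apply Finset.sum_pos' (fun i _ => div_nonneg (mul_self_nonneg _) (hd i).le)
    exact ⟨j, Finset.mem_erase.2 ⟨hjN, Finset.mem_univ j⟩, div_pos (mul_self_pos.2 hj) (hd j)⟩
  set lam := lamStar d v c with hlam
  set mu := muStar d v c with hmu
  -- expansion of c ⬝ z*
  have expand : (∑ i, c i * zStar d v c i)
      = cDv d v c - lam * cDc d c + mu * (c N / d N) := by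
    have step : ∀ i, c i * zStar d v c i
        = c i * v i / d i - lam * (c i * c i / d i)
          + (if i = N then mu * (c N / d N) else 0) := by
      intro i
      by_cases h : i = N <;>
        · simp only [zStar, ← hN, ← hlam, ← hmu, h, if_pos, if_neg, ite_true, ite_false]
          field_simp
          all_goals ring
    rw [Finset.sum_congr rfl (fun i _ => step i), Finset.sum_add_distrib,
      Finset.sum_sub_distrib, ← Finset.mul_sum, Finset.sum_ite_eq' Finset.univ N]
    simp [cDv, cDc]
  by_cases hA : v N - cDv d v c / cDc d c * c N < 0
  · -- indicator = 1
    have hind : indA d v c = 1 := by rw [indA, if_pos hA]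
    have hlamval : lam = (cDv d v c - c N * v N / d N) / (cDc d c - c N ^ 2 / d N) := by
      rw [hlam, lamStar, hind, ← hN]; ring_nf
    have hneg : v N - lam * c N ≤ 0 := by
      have key : v N - lam * c N = (v N * cDc d c - c N * cDv d v c) / (cDc d c - c N ^ 2 / d N) := by
        rw [hlamval]; field_simp; ring
      rw [key]
      apply div_nonpos_of_nonpos_of_nonneg _ hs.le
      have h2 : cDv d v c / cDc d c * c N * cDc d c = c N * cDv d v c := by
        field_simp
      have h3 := mul_lt_mul_of_pos_right hA hcDc
      rw [sub_mul, zero_mul, h2] at h3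
      linarith
    have hmuval : mu = lam * c N - v N := by
      rw [hmu, muStar, ← hN, ← hlam, max_eq_left (by linarith)]; ring
    have hzN : zStar d v c N = 0 := by
      show (v N - lamStar d v c * c N
        + muStar d v c * (if N = lastIdx n then 1 else 0)) / d N = 0
      rw [← hN, if_pos rfl, ← hlam, ← hmu, hmuval, div_eq_zero_iff]
      left; ring
    refine ⟨?_, by rw [hzN, mul_zero]⟩
    rw [expand, hmuval]
    have key2 : cDv d v c - c N * v N / d N - lam * (cDc d c - c N ^ 2 / d N) = 0 := by
      rw [hlamval]; field_simp; ring
    have hdN := hdne N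
    field_simp at key2 ⊢
    linear_combination key2
  · -- indicator = 0
    have hind : indA d v c = 0 := by rw [indA, if_neg hA]
    have hlamval : lam = cDv d v c / cDc d c := by
      rw [hlam, lamStar, hind, ← hN]; ring_nf
    have hmuval : mu = 0 := by
      rw [hmu, muStar, ← hN, ← hlam, max_eq_right]
      rw [hlamval]
      push_neg at hA
      linarith
    refine ⟨?_, by rw [hmuval, zero_mul]⟩
    rw [expand, hmuval, hlamval]
    field_simp
    ring

/-- The minimizer `z*` of the primal problem satisfies `‖z*‖ ≤ d_min⁻¹ ‖v‖`. -/
theorem zStar_norm_bound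
    (n : ℕ) (d v c : Fin (n + 2) → ℝ)
    (hd : ∀ i, 0 < d i)
    (hc : ∃ i : Fin (n + 2), i ≠ lastIdx n ∧ c i ≠ 0) :
    enorm (zStar d v c) ≤ (dMin d)⁻¹ * enorm v := by
  obtain ⟨hcz, hmz⟩ := kkt n d v c hd hc
  set z := zStar d v c with hz
  set N := lastIdx n
  have hdne : ∀ i, d i ≠ 0 := fun i => (hd i).ne'
  have hm : 0 < dMin d := by
    rw [dMin]
    exact (Finset.lt_inf'_iff _).2 (fun i _ => hd i)
  have hmle : ∀ i, dMin d ≤ d i := fun i => Finset.inf'_le _ (Finset.mem_univ i)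
  -- d i * z i = v i - lam c i + mu δ
  have hdz : ∀ i, d i * z i = v i - lamStar d v c * c i
      + muStar d v c * (if i = N then 1 else 0) := by
    intro i
    rw [hz, zStar, mul_div_cancel₀ _ (hdne i)]
  -- S1 = ∑ z v
  have hS1 : (∑ i, d i * z i ^ 2) = ∑ i, z i * v i := by
    have : ∀ i, d i * z i ^ 2 = z i * (d i * z i) := fun i => by ring
    rw [Finset.sum_congr rfl (fun i _ => this i)]
    have : ∀ i, z i * (d i * z i) = z i * v i - lamStar d v c * (c i * z i)
        + muStar d v c * (if i = N then z i else 0) := by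
      intro i
      rw [hdz i]
      by_cases h : i = N <;> simp [h] <;> ring
    rw [Finset.sum_congr rfl (fun i _ => this i), Finset.sum_add_distrib,
      Finset.sum_sub_distrib, ← Finset.mul_sum, ← Finset.mul_sum,
      Finset.sum_ite_eq' Finset.univ N, hcz]
    simp [hmz]
  -- Cauchy-Schwarz : (∑ z v)^2 ≤ S1 * S2
  have hCS : (∑ i, z i * v i) ^ 2 ≤ (∑ i, d i * z i ^ 2) * (∑ i, v i ^ 2 / d i) := by
    have := Finset.sum_mul_sq_le_sq_mul_sq Finset.univ
      (fun i => z i * Real.sqrt (d i)) (fun i => v i / Real.sqrt (d i))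
    have e1 : ∀ i : Fin (n+2), (z i * Real.sqrt (d i)) * (v i / Real.sqrt (d i)) = z i * v i := by
      intro i
      have : Real.sqrt (d i) ≠ 0 := Real.sqrt_ne_zero'.2 (hd i)
      field_simp
    have e2 : ∀ i : Fin (n+2), (z i * Real.sqrt (d i)) ^ 2 = d i * z i ^ 2 := by
      intro i; rw [mul_pow, Real.sq_sqrt (hd i).le]; ring
    have e3 : ∀ i : Fin (n+2), (v i / Real.sqrt (d i)) ^ 2 = v i ^ 2 / d i := by
      intro i; rw [div_pow, Real.sq_sqrt (hd i).le]
    simpa only [Finset.sum_congr rfl (fun i _ => e1 i), Finset.sum_congr rfl (fun i _ => e2 i),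
      Finset.sum_congr rfl (fun i _ => e3 i)] using this
  set S1 := ∑ i, d i * z i ^ 2 with hS1def
  set S2 := ∑ i, v i ^ 2 / d i with hS2def
  have hS1nn : 0 ≤ S1 := Finset.sum_nonneg fun i _ => mul_nonneg (hd i).le (sq_nonneg _)
  have hS2nn : 0 ≤ S2 := Finset.sum_nonneg fun i _ => div_nonneg (sq_nonneg _) (hd i).le
  have hS1S2 : S1 ≤ S2 := by
    rcases eq_or_lt_of_le hS1nn with h | h
    · linarith
    · rw [hS1] at hCS
      nlinarith
  -- m * Z ≤ S1
  have hZ : dMin d * (∑ i, z i ^ 2) ≤ S1 := by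
    rw [Finset.mul_sum]
    exact Finset.sum_le_sum fun i _ => mul_le_mul_of_nonneg_right (hmle i) (sq_nonneg _)
  -- S2 ≤ V / m
  have hV : S2 ≤ (∑ i, v i ^ 2) / dMin d := by
    rw [Finset.sum_div]
    exact Finset.sum_le_sum fun i _ =>
      div_le_div_of_nonneg_left (sq_nonneg _) hm (hmle i)
  have hfinal : (∑ i, z i ^ 2) ≤ (∑ i, v i ^ 2) / dMin d ^ 2 := by
    have h1 : dMin d * (∑ i, z i ^ 2) ≤ (∑ i, v i ^ 2) / dMin d := le_trans hZ (le_trans hS1S2 hV)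
    rw [le_div_iff₀ (pow_pos hm 2)]
    calc (∑ i, z i ^ 2) * dMin d ^ 2 = (dMin d * ∑ i, z i ^ 2) * dMin d := by ring
    _ ≤ ((∑ i, v i ^ 2) / dMin d) * dMin d := mul_le_mul_of_nonneg_right h1 hm.le
    _ = ∑ i, v i ^ 2 := by field_simp
  rw [enorm, enorm]
  calc Real.sqrt (∑ i, z i ^ 2) ≤ Real.sqrt ((∑ i, v i ^ 2) / dMin d ^ 2) :=
        Real.sqrt_le_sqrt hfinal
  _ = (dMin d)⁻¹ * Real.sqrt (∑ i, v i ^ 2) := by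
      rw [Real.sqrt_div (Finset.sum_nonneg fun i _ => sq_nonneg _),
        Real.sqrt_sq hm.le, div_eq_inv_mul]

end Stmt1
end
end
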